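/- Let I be a nontrivial interval of ℝ and f : I → ℝ a C^1 function. If Df is piecewise monotone on I, then so is f. -/

import Mathlib

open Set MeasureTheory

/-- `K` is closed and discrete in `I`: every point of `I` has a punctured
neighborhood missing `K`. -/
def ClosedDiscreteIn (K I : Set ℝ) : Prop :=
  K ⊆ I ∧ ∀ x ∈ I, ∃ ε > 0, ∀ y ∈ K, |y - x| < ε → y = x

/-- `f` is (non-strictly) monotone on `S`. -/
def MonoOn (f : ℝ → ℝ) (S : Set ℝ) : Prop :=
  MonotoneOn f S ∨ AntitoneOn f S

/-- `K` witnesses the piecewise monotonicity of `f` on `I`. -/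
def Witnesses (f : ℝ → ℝ) (I K : Set ℝ) : Prop :=
  ClosedDiscreteIn K I ∧
    ∀ x ∈ I \ K, MonoOn f (connectedComponentIn (I \ K) x)

/-- `f` is piecewise monotone on `I`. -/
def PiecewiseMonotoneOn (f : ℝ → ℝ) (I : Set ℝ) : Prop :=
  ∃ K, Witnesses f I K

/-- The platform of `f` containing `p`: the connected component of the fiber
of `f` (within `I`) containing `p`. -/
def Platform (f : ℝ → ℝ) (I : Set ℝ) (p : ℝ) : Set ℝ :=
  connectedComponentIn {x ∈ I | f x = f p} p

/-- `P` is a platform of `f` on `I`. -/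
def IsPlatform (f : ℝ → ℝ) (I P : Set ℝ) : Prop :=
  ∃ p ∈ I, P = Platform f I p

/-- `P` is a turning platform of `f` on `I`. -/
def IsTurningPlatform (f : ℝ → ℝ) (I P : Set ℝ) : Prop :=
  IsPlatform f I P ∧
  ∃ a b c ε, a ≤ b ∧ P = Icc a b ∧ (∀ x ∈ P, f x = c) ∧ 0 < ε ∧
    Ioo (a - ε) (b + ε) ⊆ I ∧
    ((∀ x ∈ Ioo (a - ε) (b + ε) \ P, c < f x) ∨
     (∀ x ∈ Ioo (a - ε) (b + ε) \ P, f x < c))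

/-- `x` is a turning point of `f` on `I`. -/
def IsTurningPoint (f : ℝ → ℝ) (I : Set ℝ) (x : ℝ) : Prop :=
  ∃ P, IsTurningPlatform f I P ∧ x ∈ P

def mixedS (F : ℝ → ℝ) (S : Set ℝ) : Prop :=
  (∃ a ∈ S, F a < 0) ∧ (∃ b ∈ S, 0 < F b)

open Classical in
noncomputable def turnPt (F : ℝ → ℝ) (S : Set ℝ) : ℝ :=
  if MonotoneOn F S then sSup {y ∈ S | F y < 0} else sSup {y ∈ S | 0 < F y}

lemma turnPt_spec (F : ℝ → ℝ) (S : Set ℝ) (hS : S.OrdConnected)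
    (hm : MonoOn F S) (hmix : mixedS F S) :
    turnPt F S ∈ S ∧
      ((∀ y ∈ S, y < turnPt F S → F y ≤ 0) ∧ (∀ y ∈ S, turnPt F S < y → 0 ≤ F y) ∨
       (∀ y ∈ S, y < turnPt F S → 0 ≤ F y) ∧ (∀ y ∈ S, turnPt F S < y → F y ≤ 0)) := by
  classical
  obtain ⟨⟨a, ha, hFa⟩, ⟨b, hb, hFb⟩⟩ := hmix
  by_cases hmono : MonotoneOn F S
  · have hgeq : turnPt F S = sSup {y ∈ S | F y < 0} := by rw [turnPt, if_pos hmono]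
    set A := {y ∈ S | F y < 0} with hA
    have hane : A.Nonempty := ⟨a, ha, hFa⟩
    have hbdd : BddAbove A := ⟨b, fun y hy =>
      le_of_not_gt fun hlt => (hmono hb hy.1 hlt.le).not_gt (hy.2.trans hFb)⟩
    have hta : a ≤ sSup A := le_csSup hbdd ⟨ha, hFa⟩
    have htb : sSup A ≤ b := csSup_le hane fun y hy =>
      le_of_not_gt fun hlt => (hmono hb hy.1 hlt.le).not_gt (hy.2.trans hFb)
    have htS : turnPt F S ∈ S := by rw [hgeq]; exact hS.out ha hb ⟨hta, htb⟩
    refine ⟨htS, Or.inl ⟨?_, ?_⟩⟩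
    · intro y hy hlt
      rw [hgeq] at hlt
      obtain ⟨a', ha', hya'⟩ := exists_lt_of_lt_csSup hane hlt
      exact (hmono hy ha'.1 hya'.le).trans ha'.2.le
    · intro y hy hlt
      by_contra hneg
      push_neg at hneg
      have : y ∈ A := ⟨hy, hneg⟩
      exact absurd (le_csSup hbdd this) (not_le.mpr (hgeq ▸ hlt))
  · have hanti : AntitoneOn F S := hm.resolve_left hmono
    have hgeq : turnPt F S = sSup {y ∈ S | 0 < F y} := by rw [turnPt, if_neg hmono]
    set B := {y ∈ S | 0 < F y} with hB
    have hbne : B.Nonempty := ⟨b, hb, hFb⟩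
    have hbdd : BddAbove B := ⟨a, fun y hy =>
      le_of_not_gt fun hlt => (hanti ha hy.1 hlt.le).not_gt (hFa.trans hy.2)⟩
    have htb : b ≤ sSup B := le_csSup hbdd ⟨hb, hFb⟩
    have hta : sSup B ≤ a := csSup_le hbne fun y hy =>
      le_of_not_gt fun hlt => (hanti ha hy.1 hlt.le).not_gt (hFa.trans hy.2)
    have htS : turnPt F S ∈ S := by rw [hgeq]; exact hS.out hb ha ⟨htb, hta⟩
    refine ⟨htS, Or.inr ⟨?_, ?_⟩⟩
    · intro y hy hlt
      rw [hgeq] at hlt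
      obtain ⟨b', hb', hyb'⟩ := exists_lt_of_lt_csSup hbne hlt
      exact ((hanti hy hb'.1 hyb'.le).trans_lt' hb'.2).le.trans (le_refl _) |>.trans (le_refl _)
    · intro y hy hlt
      by_contra hneg
      push_neg at hneg
      have : y ∈ B := ⟨hy, hneg⟩
      exact absurd (le_csSup hbdd this) (not_le.mpr (hgeq ▸ hlt))

lemma monoOn_of_derivWithin_sign (I D : Set ℝ) (hD : D.OrdConnected) (hDI : D ⊆ I)
    (f : ℝ → ℝ) (hf : ContDiffOn ℝ 1 f I)
    (h : (∀ y ∈ D, 0 ≤ derivWithin f I y) ∨ (∀ y ∈ D, derivWithin f I y ≤ 0)) :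
    MonoOn f D := by
  have hconv : Convex ℝ D := convex_iff_ordConnected.mpr hD
  have hcont : ContinuousOn f D := hf.continuousOn.mono hDI
  have hdiff : DifferentiableOn ℝ f I := hf.differentiableOn one_ne_zero
  have hint : ∀ y ∈ interior D, I ∈ nhds y := fun y hy =>
    mem_interior_iff_mem_nhds.mp (interior_mono hDI hy)
  have hdiff' : DifferentiableOn ℝ f (interior D) := fun y hy =>
    ((hdiff y (hDI (interior_subset hy))).differentiableAt (hint y hy)).differentiableWithinAt
  have heq : ∀ y ∈ interior D, deriv f y = derivWithin f I y := fun y hy =>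
    (derivWithin_of_mem_nhds (hint y hy)).symm
  rcases h with h | h
  · exact Or.inl (monotoneOn_of_deriv_nonneg hconv hcont hdiff' fun y hy => by
      rw [heq y hy]; exact h y (interior_subset hy))
  · exact Or.inr (antitoneOn_of_deriv_nonpos hconv hcont hdiff' fun y hy => by
      rw [heq y hy]; exact h y (interior_subset hy))

/-- If the derivative of a `C¹` function is piecewise monotone, then so is the
function itself. -/
theorem piecewiseMonotone_of_deriv_piecewiseMonotone
    (I : Set ℝ) (hI : I.OrdConnected) (hnt : I.Nontrivial)
    (f : ℝ → ℝ) (hf : ContDiffOn ℝ 1 f I)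
    (hDf : PiecewiseMonotoneOn (derivWithin f I) I) :
    PiecewiseMonotoneOn f I := by
  classical
  obtain ⟨K, ⟨hKI, hdisc⟩, hK⟩ := hDf
  set F := derivWithin f I with hF
  set T : Set ℝ := {y | ∃ x, x ∈ I \ K ∧ mixedS F (connectedComponentIn (I \ K) x) ∧
      y = turnPt F (connectedComponentIn (I \ K) x)} with hT
  have hCord : ∀ x : ℝ, (connectedComponentIn (I \ K) x).OrdConnected := fun x =>
    isPreconnected_connectedComponentIn.ordConnected
  have hTmem : ∀ t ∈ T, t ∈ I \ K ∧ mixedS F (connectedComponentIn (I \ K) t) ∧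
      turnPt F (connectedComponentIn (I \ K) t) = t := by
    intro t ht
    obtain ⟨x, hx, hmix, rfl⟩ := ht
    have hmem : turnPt F (connectedComponentIn (I \ K) x) ∈ connectedComponentIn (I \ K) x :=
      (turnPt_spec F _ (hCord x) (hK x hx) hmix).1
    have hIK : turnPt F (connectedComponentIn (I \ K) x) ∈ I \ K :=
      connectedComponentIn_subset _ _ hmem
    have hCeq := connectedComponentIn_eq hmem
    exact ⟨hIK, hCeq ▸ hmix, by rw [← hCeq]⟩
  have hTsub : ∀ u v : ℝ, (Ioo u v ∩ I ⊆ I \ K) → (T ∩ Ioo u v).Subsingleton := by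
    intro u v hJ y1 hy1 y2 hy2
    have h1 := hTmem y1 hy1.1
    have h2 := hTmem y2 hy2.1
    have hpre : IsPreconnected (Ioo u v ∩ I) := (ordConnected_Ioo.inter hI).isPreconnected
    have hy1J : y1 ∈ Ioo u v ∩ I := ⟨hy1.2, h1.1.1⟩
    have hsubC : Ioo u v ∩ I ⊆ connectedComponentIn (I \ K) y1 :=
      hpre.subset_connectedComponentIn hy1J hJ
    have hy2C : y2 ∈ connectedComponentIn (I \ K) y1 := hsubC ⟨hy2.2, h2.1.1⟩
    have hCeq := connectedComponentIn_eq hy2C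
    rw [← h1.2.2, ← h2.2.2, hCeq]
  refine ⟨K ∪ T, ⟨union_subset hKI fun t ht => (hTmem t ht).1.1, ?_⟩, ?_⟩
  · -- discreteness
    intro x hxI
    obtain ⟨ε, hε, hKε⟩ := hdisc x hxI
    set S := {y ∈ T | |y - x| < ε ∧ y ≠ x} with hS
    have hside : ∀ u v : ℝ, Ioo u v ⊆ {z | |z - x| < ε ∧ z ≠ x} →
        (Ioo u v ∩ I ⊆ I \ K) := by
      intro u v hsub z hz
      refine ⟨hz.2, fun hzK => ?_⟩
      exact (hsub hz.1).2 (hKε z hzK (hsub hz.1).1)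
    have habs : ∀ z : ℝ, z ∈ Ioo (x - ε) x ∪ Ioo x (x + ε) → |z - x| < ε ∧ z ≠ x := by
      intro z hz
      rcases hz with hz | hz
      · constructor
        · rw [abs_sub_lt_iff]; constructor <;> linarith [hz.1, hz.2]
        · exact hz.2.ne
      · constructor
        · rw [abs_sub_lt_iff]; constructor <;> linarith [hz.1, hz.2]
        · exact hz.1.ne'
    have hL := hTsub (x - ε) x (hside _ _ fun z hz => habs z (Or.inl hz))
    have hR := hTsub x (x + ε) (hside _ _ fun z hz => habs z (Or.inr hz))
    have hSsub : S ⊆ (T ∩ Ioo (x - ε) x) ∪ (T ∩ Ioo x (x + ε)) := by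
      rintro y ⟨hyT, hyd, hyne⟩
      rw [abs_sub_lt_iff] at hyd
      rcases lt_or_gt_of_ne hyne with h | h
      · exact Or.inl ⟨hyT, by linarith [hyd.2], h⟩
      · exact Or.inr ⟨hyT, h, by linarith [hyd.1]⟩
    have hSfin : S.Finite := (hL.finite.union hR.finite).subset hSsub
    by_cases hSne : S.Nonempty
    · obtain ⟨m, hm, hmin⟩ := Set.exists_min_image S (fun y => |y - x|) hSfin hSne
      refine ⟨|m - x|, abs_pos.mpr (sub_ne_zero.mpr hm.2.2), ?_⟩
      intro y hy hyd
      by_contra hyne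
      have hyd' : |y - x| < ε := hyd.trans hm.2.1
      rcases hy with hyK | hyT
      · exact hyne (hKε y hyK hyd')
      · exact absurd (hmin y ⟨hyT, hyd', hyne⟩) (not_le.mpr hyd)
    · refine ⟨ε, hε, ?_⟩
      intro y hy hyd
      by_contra hyne
      rcases hy with hyK | hyT
      · exact hyne (hKε y hyK hyd)
      · exact hSne ⟨y, hyT, hyd, hyne⟩
  · -- monotonicity on components
    intro x hx
    set C' := connectedComponentIn (I \ (K ∪ T)) x with hC'
    have hx' : x ∈ I \ K := ⟨hx.1, fun h => hx.2 (Or.inl h)⟩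
    have hsub : C' ⊆ connectedComponentIn (I \ K) x :=
      connectedComponentIn_mono x (diff_subset_diff_right subset_union_left)
    have hC'I : C' ⊆ I := (connectedComponentIn_subset _ _).trans diff_subset
    have hC'ord : C'.OrdConnected := isPreconnected_connectedComponentIn.ordConnected
    by_cases hmix : mixedS F (connectedComponentIn (I \ K) x)
    · obtain ⟨htC, hsigns⟩ := turnPt_spec F _ (hCord x) (hK x hx') hmix
      set t := turnPt F (connectedComponentIn (I \ K) x) with ht
      have htT : t ∈ T := ⟨x, hx', hmix, rfl⟩
      have htC' : t ∉ C' := fun h => (connectedComponentIn_subset _ _ h).2 (Or.inr htT)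
      have hxC' : x ∈ C' := mem_connectedComponentIn hx
      have hxt : x ≠ t := fun h => htC' (h ▸ hxC')
      rcases lt_or_gt_of_ne hxt with hlt | hgt
      · have hall : ∀ y ∈ C', y < t := by
          intro y hy
          rcases lt_trichotomy y t with h | h | h
          · exact h
          · exact absurd (h ▸ hy) htC'
          · exact absurd (hC'ord.out hxC' hy ⟨hlt.le, h.le⟩) htC'
        refine monoOn_of_derivWithin_sign I C' hC'ord hC'I f hf ?_
        rcases hsigns with ⟨hLs, _⟩ | ⟨hLs, _⟩
        · exact Or.inr fun y hy => hLs y (hsub hy) (hall y hy)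
        · exact Or.inl fun y hy => hLs y (hsub hy) (hall y hy)
      · have hall : ∀ y ∈ C', t < y := by
          intro y hy
          rcases lt_trichotomy t y with h | h | h
          · exact h
          · exact absurd (h ▸ hy) htC'
          · exact absurd (hC'ord.out hy hxC' ⟨h.le, hgt.le⟩) htC'
        refine monoOn_of_derivWithin_sign I C' hC'ord hC'I f hf ?_
        rcases hsigns with ⟨_, hRs⟩ | ⟨_, hRs⟩
        · exact Or.inl fun y hy => hRs y (hsub hy) (hall y hy)
        · exact Or.inr fun y hy => hRs y (hsub hy) (hall y hy)
    · refine monoOn_of_derivWithin_sign I C' hC'ord hC'I f hf ?_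
      rw [mixedS, not_and_or] at hmix
      rcases hmix with h | h
      · push_neg at h
        exact Or.inl fun y hy => h y (hsub hy)
      · push_neg at h
        exact Or.inr fun y hy => h y (hsub hy)
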